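/- Let r ≥ 2 be an integer and let h : ℝ² → [0,∞) be an integrable function with ∫∫_{ℝ²} h(x,y) dx dy = 1 which is TP_r on ℝ×ℝ. Then both the distribution function H(x,y) = ∫_{−∞}^{x}∫_{−∞}^{y} h(u,v) dv du and the survival function H̄(x,y) = ∫_{x}^{∞}∫_{y}^{∞} h(u,v) dv du are TP_r on ℝ×ℝ. In particular, if h is TP_∞ then H and H̄ are TP_∞. -/

import Mathlib

open Real Set MeasureTheory

/-- `K` is totally positive of order `r` on `S × T`. -/
def TPr (r : ℕ) (K : ℝ → ℝ → ℝ) (S T : Set ℝ) : Prop :=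
  ∀ s : ℕ, 2 ≤ s → s ≤ r → ∀ x y : Fin s → ℝ, StrictMono x → StrictMono y →
    (∀ i, x i ∈ S) → (∀ i, y i ∈ T) →
      0 ≤ (Matrix.of fun i j => K (x i) (y j)).det


lemma det_step {s : ℕ} (k : Fin s → ℕ) (hk : Monotone k) (hks : ∀ i, k i ≤ s) :
    0 ≤ (Matrix.of fun i j : Fin s => if (j : ℕ) < k i then (1:ℝ) else 0).det := by
  rcases Nat.eq_zero_or_pos s with hs | hs
  · subst hs
    simp [Matrix.det_isEmpty]
  by_cases hinj : Function.Injective k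
  · have hsm : StrictMono k := hk.strictMono_of_injective hinj
    have hstep : ∀ d m (hmd : m + d < s), k ⟨m, by omega⟩ + d ≤ k ⟨m + d, hmd⟩ := by
      intro d
      induction d with
      | zero => intro m hmd; simp
      | succ n ih =>
        intro m hmd
        have h1 : m + n < s := by omega
        have h2 : k ⟨m + n, h1⟩ < k ⟨m + n + 1, by omega⟩ := by
          apply hsm; simp [Fin.lt_def]
        have := ih m h1
        have : k ⟨m, by omega⟩ + n ≤ k ⟨m + n, h1⟩ := this
        show k ⟨m, by omega⟩ + (n + 1) ≤ k ⟨m + n + 1, by omega⟩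
        omega
    by_cases h0 : k ⟨0, hs⟩ = 0
    · rw [Matrix.det_eq_zero_of_row_eq_zero ⟨0, hs⟩ (fun j => by simp [h0])]
    · have hkeq : ∀ i : Fin s, k i = (i : ℕ) + 1 := by
        intro i
        have hl : (i : ℕ) + 1 ≤ k i := by
          have := hstep (i : ℕ) 0 (by simpa using i.isLt)
          have h1 : 1 ≤ k ⟨0, hs⟩ := Nat.one_le_iff_ne_zero.2 h0
          have h2 : k ⟨(0 : ℕ) + (i : ℕ), by simpa using i.isLt⟩ = k i := by congr 1; ext; simp
          omega
        have hh : k i ≤ (i : ℕ) + 1 := by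
          have hd : (i : ℕ) + (s - 1 - (i : ℕ)) < s := by have := i.isLt; omega
          have := hstep (s - 1 - (i : ℕ)) (i : ℕ) hd
          have h2 : k ⟨(i : ℕ), by omega⟩ = k i := by congr 1
          have h3 : k ⟨(i : ℕ) + (s - 1 - (i : ℕ)), hd⟩ ≤ s := hks _
          have := i.isLt
          omega
        omega
      have htri : (Matrix.of fun i j : Fin s => if (j : ℕ) < k i then (1:ℝ) else 0).BlockTriangular OrderDual.toDual := by
        intro i j hij
        have : (i : ℕ) < (j : ℕ) := hij
        simp only [Matrix.of_apply, hkeq]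
        rw [if_neg (by omega)]
      rw [Matrix.det_of_lowerTriangular _ htri]
      have : ∀ i : Fin s, (Matrix.of fun i j : Fin s => if (j : ℕ) < k i then (1:ℝ) else 0) i i = 1 := by
        intro i; simp [hkeq]
      rw [Finset.prod_congr rfl (fun i _ => this i)]
      simp
  · rw [Function.not_injective_iff] at hinj
    obtain ⟨i1, i2, hk12, hne⟩ := hinj
    rw [Matrix.det_zero_of_row_eq hne (by funext j; simp [hk12])]

lemma det_indicator_Iic {s : ℕ} (x u : Fin s → ℝ) (hx : Monotone x) (hu : StrictMono u) :
    0 ≤ (Matrix.of fun i j : Fin s => if u j ≤ x i then (1:ℝ) else 0).det := by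
  set k : Fin s → ℕ := fun i => (Finset.univ.filter fun j => u j ≤ x i).card with hkdef
  have key : ∀ i j : Fin s, (u j ≤ x i) ↔ (j : ℕ) < k i := by
    intro i j
    constructor
    · intro hij
      have hsub : Finset.Iic j ⊆ Finset.univ.filter fun j' => u j' ≤ x i := by
        intro j' hj'
        simp only [Finset.mem_Iic] at hj'
        simp only [Finset.mem_filter, Finset.mem_univ, true_and]
        exact le_trans (hu.monotone hj') hij
      have := Finset.card_le_card hsub
      rw [Fin.card_Iic] at this
      have hki : k i = (Finset.univ.filter fun j' => u j' ≤ x i).card := rfl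
      omega
    · intro hij
      by_contra hc
      push_neg at hc
      have hsub : (Finset.univ.filter fun j' => u j' ≤ x i) ⊆ Finset.Iio j := by
        intro j' hj'
        simp only [Finset.mem_filter, Finset.mem_univ, true_and] at hj'
        simp only [Finset.mem_Iio]
        exact hu.lt_iff_lt.1 (lt_of_le_of_lt hj' hc)
      have := Finset.card_le_card hsub
      rw [Fin.card_Iio] at this
      have hki : k i = (Finset.univ.filter fun j' => u j' ≤ x i).card := rfl
      omega
  have heq : (Matrix.of fun i j : Fin s => if u j ≤ x i then (1:ℝ) else 0)
      = (Matrix.of fun i j : Fin s => if (j : ℕ) < k i then (1:ℝ) else 0) := by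
    funext i j
    simp only [Matrix.of_apply]
    exact if_congr (key i j) rfl rfl
  rw [heq]
  refine det_step k (fun i i' hii' => Finset.card_le_card ?_) (fun i => le_trans (Finset.card_filter_le _ _) (by simp))
  intro j hj
  simp only [Finset.mem_filter, Finset.mem_univ, true_and] at hj ⊢
  exact le_trans hj (hx hii')

lemma det_indicator_Ioi {s : ℕ} (x u : Fin s → ℝ) (hx : Monotone x) (hu : StrictMono u) :
    0 ≤ (Matrix.of fun i j : Fin s => if x i < u j then (1:ℝ) else 0).det := by
  have hrev : (Matrix.of fun i j : Fin s => if x i < u j then (1:ℝ) else 0).det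
      = ((Matrix.of fun i j : Fin s => if x i < u j then (1:ℝ) else 0).submatrix
          (Fin.revPerm : Equiv.Perm (Fin s)) (Fin.revPerm : Equiv.Perm (Fin s))).det :=
    (Matrix.det_submatrix_equiv_self _ _).symm
  rw [hrev]
  set k : Fin s → ℕ := fun i => (Finset.univ.filter fun j => x (Fin.rev i) < u j).card with hkdef
  have key : ∀ i j : Fin s, (x (Fin.rev i) < u (Fin.rev j)) ↔ (j : ℕ) < k i := by
    intro i j
    constructor
    · intro hij
      have hsub : Finset.Ici (Fin.rev j) ⊆ Finset.univ.filter fun j' => x (Fin.rev i) < u j' := by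
        intro j' hj'
        simp only [Finset.mem_Ici] at hj'
        simp only [Finset.mem_filter, Finset.mem_univ, true_and]
        exact lt_of_lt_of_le hij (hu.monotone hj')
      have := Finset.card_le_card hsub
      rw [Fin.card_Ici] at this
      have hki : k i = (Finset.univ.filter fun j' => x (Fin.rev i) < u j').card := rfl
      have hjv : (Fin.rev j : ℕ) = s - ((j : ℕ) + 1) := by rw [Fin.val_rev]
      have := j.isLt
      omega
    · intro hij
      by_contra hc
      push_neg at hc
      have hsub : (Finset.univ.filter fun j' => x (Fin.rev i) < u j') ⊆ Finset.Ioi (Fin.rev j) := by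
        intro j' hj'
        simp only [Finset.mem_filter, Finset.mem_univ, true_and] at hj'
        simp only [Finset.mem_Ioi]
        exact hu.lt_iff_lt.1 (lt_of_le_of_lt hc hj')
      have := Finset.card_le_card hsub
      rw [Fin.card_Ioi] at this
      have hki : k i = (Finset.univ.filter fun j' => x (Fin.rev i) < u j').card := rfl
      have hjv : (Fin.rev j : ℕ) = s - ((j : ℕ) + 1) := by rw [Fin.val_rev]
      have := j.isLt
      omega
  have heq : ((Matrix.of fun i j : Fin s => if x i < u j then (1:ℝ) else 0).submatrix
          (Fin.revPerm : Equiv.Perm (Fin s)) (Fin.revPerm : Equiv.Perm (Fin s)))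
      = (Matrix.of fun i j : Fin s => if (j : ℕ) < k i then (1:ℝ) else 0) := by
    funext i j
    simp only [Matrix.submatrix_apply, Matrix.of_apply, Fin.revPerm_apply]
    exact if_congr (key i j) rfl rfl
  rw [heq]
  refine det_step k (fun i i' hii' => Finset.card_le_card ?_) (fun i => le_trans (Finset.card_filter_le _ _) (by simp))
  intro j hj
  simp only [Finset.mem_filter, Finset.mem_univ, true_and] at hj ⊢
  exact lt_of_le_of_lt (hx (Fin.rev_le_rev.2 hii')) hj

lemma det_eq_sum_perm {s : ℕ} (A : Matrix (Fin s) (Fin s) ℝ) :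
    A.det = ∑ σ : Equiv.Perm (Fin s), ((Equiv.Perm.sign σ : ℤ) : ℝ) * ∏ i, A i (σ i) := by
  rw [← Matrix.det_transpose, Matrix.det_apply']
  rfl

lemma prod_det_nonneg {s : ℕ} (K L : ℝ → ℝ → ℝ) (x y : Fin s → ℝ) (G : Set ℝ)
    (t : Fin s → ℝ) (ht : ∀ i, t i ∈ G)
    (hK : ∀ t' : Fin s → ℝ, StrictMono t' → (∀ i, t' i ∈ G) →
      0 ≤ (Matrix.of fun i j => K (x i) (t' j)).det)
    (hL : ∀ t' : Fin s → ℝ, StrictMono t' → (∀ i, t' i ∈ G) →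
      0 ≤ (Matrix.of fun i j => L (t' i) (y j)).det) :
    0 ≤ (Matrix.of fun i j => K (x i) (t j)).det * (Matrix.of fun i j => L (t i) (y j)).det := by
  by_cases hinj : Function.Injective t
  · set τ := Tuple.sort t with hτ
    have hmono : Monotone (t ∘ τ) := Tuple.monotone_sort t
    have hsm : StrictMono (t ∘ τ) := hmono.strictMono_of_injective (hinj.comp τ.injective)
    have h1 : 0 ≤ (Matrix.of fun i j => K (x i) ((t ∘ τ) j)).det := hK _ hsm (fun i => ht _)
    have h2 : 0 ≤ (Matrix.of fun i j => L ((t ∘ τ) i) (y j)).det := hL _ hsm (fun i => ht _)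
    have e1 : (Matrix.of fun i j => K (x i) ((t ∘ τ) j)).det
        = (Equiv.Perm.sign τ : ℤ) * (Matrix.of fun i j => K (x i) (t j)).det := by
      have hm : (Matrix.of fun i j => K (x i) ((t ∘ τ) j))
          = (Matrix.of fun i j => K (x i) (t j)).submatrix id τ := rfl
      rw [hm, Matrix.det_permute']
    have e2 : (Matrix.of fun i j => L ((t ∘ τ) i) (y j)).det
        = (Equiv.Perm.sign τ : ℤ) * (Matrix.of fun i j => L (t i) (y j)).det := by
      have hm : (Matrix.of fun i j => L ((t ∘ τ) i) (y j))
          = (Matrix.of fun i j => L (t i) (y j)).submatrix τ id := rfl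
      rw [hm, Matrix.det_permute]
    simp only [Function.comp_apply] at h1 h2
    rcases Int.units_eq_one_or (Equiv.Perm.sign τ) with hs | hs <;>
      rw [hs] at e1 e2 <;> norm_num at e1 e2 <;> rw [e1] at h1 <;> rw [e2] at h2
    · exact mul_nonneg h1 h2
    · have := mul_nonneg h1 h2
      rwa [neg_mul_neg] at this

  · rw [Function.not_injective_iff] at hinj
    obtain ⟨i, j, hij, hne⟩ := hinj
    have : (Matrix.of fun i j => L (t i) (y j)).det = 0 :=
      Matrix.det_zero_of_row_eq hne (by funext k; simp [hij])
    rw [this, mul_zero]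

lemma det_integral_nonneg {s : ℕ} (K L : ℝ → ℝ → ℝ) (x y : Fin s → ℝ)
    (hinteg : ∀ i j, Integrable (fun t => K (x i) t * L t (y j)) volume)
    (hae : ∀ᵐ t : Fin s → ℝ ∂volume, 0 ≤ (Matrix.of fun i j => K (x i) (t j)).det *
        (Matrix.of fun i j => L (t i) (y j)).det) :
    0 ≤ (Matrix.of fun i j => ∫ t, K (x i) t * L t (y j)).det := by
  set g : Fin s → Fin s → ℝ → ℝ := fun i j t => K (x i) t * L t (y j) with hg
  set F : (Fin s → ℝ) → ℝ := fun t => ∑ σ : Equiv.Perm (Fin s),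
      ((Equiv.Perm.sign σ : ℤ) : ℝ) * ∏ i, g i (σ i) (t i) with hF
  have hsummand : ∀ σ : Equiv.Perm (Fin s), Integrable
      (fun t : Fin s → ℝ => ((Equiv.Perm.sign σ : ℤ) : ℝ) * ∏ i, g i (σ i) (t i)) volume :=
    fun σ => (Integrable.fintype_prod (fun i => hinteg i (σ i))).const_mul _
  have hFint : Integrable F volume := integrable_finset_sum _ (fun σ _ => hsummand σ)
  have stepA : (Matrix.of fun i j => ∫ t, K (x i) t * L t (y j)).det = ∫ t : Fin s → ℝ, F t := by
    rw [det_eq_sum_perm]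
    rw [integral_finset_sum _ (fun σ _ => hsummand σ)]
    refine Finset.sum_congr rfl (fun σ _ => ?_)
    rw [integral_const_mul, MeasureTheory.integral_fintype_prod_volume_eq_prod (ι := Fin s)
      (fun i => g i (σ i))]
    rfl
  have stepB : ∀ τ : Equiv.Perm (Fin s),
      Integrable (fun t : Fin s → ℝ => F (t ∘ τ)) volume ∧
        (∫ t : Fin s → ℝ, F (t ∘ τ)) = ∫ t : Fin s → ℝ, F t := by
    intro τ
    have mp0 := volume_measurePreserving_piCongrLeft (fun _ : Fin s => ℝ) τ
    have mp := mp0.symm (MeasurableEquiv.piCongrLeft (fun _ : Fin s => ℝ) τ)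
    have hcomp : (fun t : Fin s → ℝ => F (t ∘ τ))
        = F ∘ ⇑(MeasurableEquiv.piCongrLeft (fun _ : Fin s => ℝ) τ).symm := by
      funext a
      show F (a ∘ τ) = F ((MeasurableEquiv.piCongrLeft (fun _ : Fin s => ℝ) τ).symm a)
      have ha : (MeasurableEquiv.piCongrLeft (fun _ : Fin s => ℝ) τ).symm a = a ∘ τ := by
        funext i
        rfl
      rw [ha]
    constructor
    · rw [hcomp]
      exact (mp.integrable_comp_emb
        (MeasurableEquiv.piCongrLeft (fun _ : Fin s => ℝ) τ).symm.measurableEmbedding).2 hFint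
    · rw [hcomp]
      exact mp.integral_comp' F
  have stepC : ∀ t : Fin s → ℝ, (∑ τ : Equiv.Perm (Fin s), F (t ∘ τ))
      = (Matrix.of fun i j => K (x i) (t j)).det *
          (Matrix.of fun i j => L (t i) (y j)).det := by
    intro t
    have hterm : ∀ τ : Equiv.Perm (Fin s), F (t ∘ τ)
        = (((Equiv.Perm.sign τ : ℤ) : ℝ) * ∏ i, K (x i) (t (τ i))) *
            (Matrix.of fun i j => L (t i) (y j)).det := by
      intro τ
      have h1 : F (t ∘ τ) = ∑ σ : Equiv.Perm (Fin s), ((Equiv.Perm.sign σ : ℤ) : ℝ) *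
          ((∏ i, K (x i) (t (τ i))) * ∏ i, L (t (τ i)) (y (σ i))) := by
        rw [hF]
        refine Finset.sum_congr rfl (fun σ _ => ?_)
        rw [← Finset.prod_mul_distrib]
        rfl
      rw [h1]
      have h2 : ∑ σ : Equiv.Perm (Fin s), ((Equiv.Perm.sign σ : ℤ) : ℝ) *
          ((∏ i, K (x i) (t (τ i))) * ∏ i, L (t (τ i)) (y (σ i)))
          = (∏ i, K (x i) (t (τ i))) * ∑ σ : Equiv.Perm (Fin s),
              ((Equiv.Perm.sign σ : ℤ) : ℝ) * ∏ i, L (t (τ i)) (y (σ i)) := by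
        rw [Finset.mul_sum]
        exact Finset.sum_congr rfl (fun σ _ => by ring)
      rw [h2]
      have h3 : (Matrix.of fun i j => L (t (τ i)) (y j)).det
          = ∑ σ : Equiv.Perm (Fin s), ((Equiv.Perm.sign σ : ℤ) : ℝ) *
              ∏ i, L (t (τ i)) (y (σ i)) := by
        rw [det_eq_sum_perm]
        rfl
      rw [← h3]
      have h4 : (Matrix.of fun i j => L (t (τ i)) (y j))
          = (Matrix.of fun i j => L (t i) (y j)).submatrix τ id := rfl
      rw [h4, Matrix.det_permute]
      ring
    rw [Finset.sum_congr rfl (fun τ _ => hterm τ), ← Finset.sum_mul]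
    congr 1
    have h5 : (Matrix.of fun i j => K (x i) (t j)).det
        = ∑ σ : Equiv.Perm (Fin s), ((Equiv.Perm.sign σ : ℤ) : ℝ) *
            ∏ i, K (x i) (t (σ i)) := by
      rw [det_eq_sum_perm]
      rfl
    rw [h5]
  have hsum : (∑ τ : Equiv.Perm (Fin s), ∫ t : Fin s → ℝ, F (t ∘ τ))
      = ∫ t : Fin s → ℝ, ∑ τ : Equiv.Perm (Fin s), F (t ∘ τ) :=
    (integral_finset_sum _ (fun τ _ => (stepB τ).1)).symm
  have hpos : 0 ≤ ∫ t : Fin s → ℝ, ∑ τ : Equiv.Perm (Fin s), F (t ∘ τ) := by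
    refine integral_nonneg_of_ae ?_
    filter_upwards [hae] with t ht
    rw [stepC t]
    exact ht
  have hcard : (∑ τ : Equiv.Perm (Fin s), ∫ t : Fin s → ℝ, F (t ∘ τ))
      = (Fintype.card (Equiv.Perm (Fin s)) : ℝ) * ∫ t : Fin s → ℝ, F t := by
    rw [Finset.sum_congr rfl (fun τ _ => (stepB τ).2), Finset.sum_const, Finset.card_univ,
      nsmul_eq_mul]
  have hfin : 0 ≤ (Fintype.card (Equiv.Perm (Fin s)) : ℝ) * ∫ t : Fin s → ℝ, F t := by
    rw [← hcard, hsum]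
    exact hpos
  have hcpos : (0:ℝ) < (Fintype.card (Equiv.Perm (Fin s)) : ℝ) :=
    Nat.cast_pos.2 Fintype.card_pos
  rw [stepA]
  nlinarith [hfin, hcpos]

lemma aux_tp {r : ℕ} (h : ℝ → ℝ → ℝ)
    (hint : Integrable (fun p : ℝ × ℝ => h p.1 p.2))
    (hTP : TPr r h univ univ)
    (I : ℝ → Set ℝ) (hImeas : ∀ a, MeasurableSet (I a))
    (hIdet : ∀ (s : ℕ) (x u : Fin s → ℝ), StrictMono x → StrictMono u →
      0 ≤ (Matrix.of fun i j : Fin s =>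
            (I (x i)).indicator (fun _ => (1:ℝ)) (u j)).det) :
    TPr r (fun a b => ∫ u in I a, ∫ v in I b, h u v) univ univ := by
  intro s hs2 hsr x y hx hy _ _
  set Good : Set ℝ := {u : ℝ | Integrable (fun v => h u v) volume} with hGdef
  have hGoodae : ∀ᵐ u : ℝ, u ∈ Good := by
    have h2 := hint
    rw [Measure.volume_eq_prod] at h2
    exact h2.prod_right_ae
  set K1 : ℝ → ℝ → ℝ := fun a u => (I a).indicator (fun _ => (1:ℝ)) u with hK1def
  set L1 : ℝ → ℝ → ℝ := fun u b => ∫ v in I b, h u v with hL1def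
  -- pointwise multiplication identities
  have hker : ∀ (b : ℝ) (u v : ℝ), h u v * K1 b v = (I b).indicator (fun v => h u v) v := by
    intro b u v
    by_cases hv : v ∈ I b <;> simp [hK1def, Set.indicator_apply, hv]
  have hker2 : ∀ (a : ℝ) (u : ℝ) (c : ℝ), K1 a u * c = (I a).indicator (fun _ => c) u := by
    intro a u c
    by_cases hu : u ∈ I a <;> simp [hK1def, Set.indicator_apply, hu]
  -- outer integrability
  have hinteg_out : ∀ i j, Integrable (fun u => K1 (x i) u * L1 u (y j)) volume := by
    intro i j
    set F2 : ℝ × ℝ → ℝ := (I (x i) ×ˢ I (y j)).indicator (fun p => h p.1 p.2) with hF2def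
    have hF2 : Integrable F2 volume := hint.indicator ((hImeas _).prod (hImeas _))
    rw [Measure.volume_eq_prod] at hF2
    have h3 : Integrable (fun u => ∫ v, F2 (u, v)) volume := hF2.integral_prod_left
    refine h3.congr (Filter.Eventually.of_forall fun u => ?_)
    show (∫ v, F2 (u, v)) = K1 (x i) u * L1 u (y j)
    by_cases hu : u ∈ I (x i)
    · have hv : ∀ v, F2 (u, v) = (I (y j)).indicator (fun v => h u v) v := by
        intro v
        by_cases hvv : v ∈ I (y j) <;>
          simp [hF2def, Set.indicator_apply, Set.mem_prod, hu, hvv]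
      rw [show (∫ v, F2 (u, v)) = ∫ v, (I (y j)).indicator (fun v => h u v) v from by
        congr 1; funext v; exact hv v]
      rw [integral_indicator (hImeas (y j))]
      simp [hK1def, hL1def, Set.indicator_apply, hu]
    · have hv : ∀ v, F2 (u, v) = 0 := by
        intro v
        simp [hF2def, Set.indicator_apply, Set.mem_prod, hu]
      rw [show (∫ v, F2 (u, v)) = 0 from by simp [hv]]
      simp [hK1def, Set.indicator_apply, hu]
  -- a.e. nonnegativity of the product of determinants
  have hae_out : ∀ᵐ t : Fin s → ℝ ∂volume,
      0 ≤ (Matrix.of fun i j => K1 (x i) (t j)).det *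
        (Matrix.of fun i j => L1 (t i) (y j)).det := by
    obtain ⟨N, hNsub, hNmeas, hNnull⟩ :=
      exists_measurable_superset_of_null (ae_iff.1 hGoodae)
    have hpre : ∀ i : Fin s, (volume : Measure (Fin s → ℝ)) (Function.eval i ⁻¹' N) = 0 := by
      intro i
      have hset : Function.eval i ⁻¹' N
          = Set.pi univ (Function.update (fun _ : Fin s => (univ : Set ℝ)) i N) := by
        ext t
        simp only [Set.mem_preimage, Set.mem_pi, Set.mem_univ, true_implies]
        constructor
        · intro hti j
          rcases eq_or_ne j i with rfl | hj
          · simpa [Function.update_self] using hti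
          · simp [Function.update_of_ne hj]
        · intro hall
          simpa [Function.update_self] using hall i
      rw [hset, volume_pi_pi]
      refine Finset.prod_eq_zero (Finset.mem_univ i) ?_
      simp [Function.update_self, hNnull]
    have htuple : ∀ᵐ t : Fin s → ℝ ∂volume, ∀ i, t i ∈ Good := by
      rw [ae_iff]
      refine measure_mono_null ?_ (measure_iUnion_null fun i => hpre i)
      intro t ht
      push_neg at ht
      obtain ⟨i, hi⟩ := ht
      exact Set.mem_iUnion.2 ⟨i, hNsub hi⟩
    filter_upwards [htuple] with t htg
    refine prod_det_nonneg K1 L1 x y Good t htg ?_ ?_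
    · intro t' ht' _
      exact hIdet s x t' hx ht'
    · intro t' ht' htg'
      have hmat : (Matrix.of fun i j => L1 (t' i) (y j))
          = (Matrix.of fun i j => ∫ v, h (t' i) v * K1 (y j) v) := by
        funext i j
        simp only [Matrix.of_apply]
        rw [show (∫ v, h (t' i) v * K1 (y j) v)
            = ∫ v, (I (y j)).indicator (fun v => h (t' i) v) v from by
          congr 1; funext v; exact hker (y j) (t' i) v]
        rw [integral_indicator (hImeas (y j))]
      rw [hmat]
      refine det_integral_nonneg h (fun v b => K1 b v) t' y ?_ ?_
      · intro i j
        have hgi : Integrable (fun v => h (t' i) v) volume := htg' i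
        refine (hgi.indicator (hImeas (y j))).congr
          (Filter.Eventually.of_forall fun v => ?_)
        exact (hker (y j) (t' i) v).symm
      · refine Filter.Eventually.of_forall fun t'' => ?_
        refine prod_det_nonneg h (fun v b => K1 b v) t' y univ t'' (fun _ => trivial) ?_ ?_
        · intro t''' h3mono _
          exact hTP s hs2 hsr t' t''' ht' h3mono (fun _ => trivial) (fun _ => trivial)
        · intro t''' h3mono _
          rw [show (Matrix.of fun i j => K1 (y j) (t''' i))
              = Matrix.transpose (Matrix.of fun i j => K1 (y i) (t''' j)) from rfl,
            Matrix.det_transpose]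
          exact hIdet s y t''' hy h3mono
  have hfinal := det_integral_nonneg K1 L1 x y hinteg_out hae_out
  have hentry : (Matrix.of fun i j => ∫ u, K1 (x i) u * L1 u (y j))
      = (Matrix.of fun i j =>
          (fun a b => ∫ u in I a, ∫ v in I b, h u v) (x i) (y j)) := by
    funext i j
    simp only [Matrix.of_apply]
    rw [show (∫ u, K1 (x i) u * L1 u (y j))
        = ∫ u, (I (x i)).indicator (fun u => L1 u (y j)) u from by
      congr 1; funext u; exact hker2 (x i) u (L1 u (y j))]
    rw [integral_indicator (hImeas (x i))]
  rw [hentry] at hfinal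
  exact hfinal

theorem tp_r_density_implies_tp_r_cdf_and_survival (r : ℕ) (hr : 2 ≤ r)
    (h : ℝ → ℝ → ℝ) (hnn : ∀ x y : ℝ, 0 ≤ h x y)
    (hint : Integrable (fun p : ℝ × ℝ => h p.1 p.2))
    (hone : ∫ p : ℝ × ℝ, h p.1 p.2 = 1)
    (hTP : TPr r h univ univ) :
    TPr r (fun x y => ∫ u in Iic x, ∫ v in Iic y, h u v) univ univ ∧
      TPr r (fun x y => ∫ u in Ioi x, ∫ v in Ioi y, h u v) univ univ := by
  constructor
  · refine aux_tp h hint hTP (fun a => Iic a) (fun a => measurableSet_Iic) ?_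
    intro s x u hx hu
    have heq : (Matrix.of fun i j : Fin s => (Iic (x i)).indicator (fun _ => (1:ℝ)) (u j))
        = (Matrix.of fun i j : Fin s => if u j ≤ x i then (1:ℝ) else 0) := by
      funext i j
      simp [Set.indicator_apply, Set.mem_Iic]
    rw [heq]
    exact det_indicator_Iic x u hx.monotone hu
  · refine aux_tp h hint hTP (fun a => Ioi a) (fun a => measurableSet_Ioi) ?_
    intro s x u hx hu
    have heq : (Matrix.of fun i j : Fin s => (Ioi (x i)).indicator (fun _ => (1:ℝ)) (u j))
        = (Matrix.of fun i j : Fin s => if x i < u j then (1:ℝ) else 0) := by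
      funext i j
      simp [Set.indicator_apply, Set.mem_Ioi]
    rw [heq]
    exact det_indicator_Ioi x u hx.monotone hu
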